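/- Let T be a set and Q : T × T → ℂ. Define Ψ_π on functions f : T^n → ℂ by extending k ↦ Ψ_k multiplicatively along a reduced word for π. Then for every π ∈ S_n and f : T^n → ℂ, (Ψ_π f)(t) = Q_{π^{-1}}(t) · f(t_π), where t_π = (t_{π(1)},…,t_{π(n)}) and Q_π(t) = ∏_{1 ≤ i < j ≤ n, π(i) > π(j)} Q(t_i, t_j). In particular, Ψ_π is well defined (independent of the chosen reduced word). -/

import Mathlib

/-- `Q_π(t) = ∏_{i<j, π(i)>π(j)} Q(t_i, t_j)`. -/
def Qprod {T : Type*} (n : ℕ) (Q : T → T → ℂ) (π : Equiv.Perm (Fin n)) (t : Fin n → T) : ℂ :=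
  ∏ p ∈ Finset.univ.filter (fun p : Fin n × Fin n => p.1 < p.2 ∧ π p.2 < π p.1),
    Q (t p.1) (t p.2)

/-- The number of inversions of a permutation of `Fin n`. -/
def invCount {n : ℕ} (π : Equiv.Perm (Fin n)) : ℕ :=
  (Finset.univ.filter (fun p : Fin n × Fin n => p.1 < p.2 ∧ π p.2 < π p.1)).card

/-- The adjacent transposition `(j, j+1)` in `S_{n+1}`. -/
def adjSwap (n : ℕ) (j : Fin n) : Equiv.Perm (Fin (n + 1)) :=
  Equiv.swap j.castSucc j.succ

/-- The operator `Ψ_j`. -/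
def Psi {T : Type*} (n : ℕ) (Q : T → T → ℂ) (j : Fin n)
    (f : (Fin (n + 1) → T) → ℂ) : (Fin (n + 1) → T) → ℂ :=
  fun t => Q (t j.castSucc) (t j.succ) * f (t ∘ Equiv.swap j.castSucc j.succ)

/-- The product `Ψ_{j₁} ⋯ Ψ_{j_m}` of the operators `Ψ_j` along a word. -/
def PsiList {T : Type*} (n : ℕ) (Q : T → T → ℂ) :
    List (Fin n) → ((Fin (n + 1) → T) → ℂ) → ((Fin (n + 1) → T) → ℂ)
  | [], f => f
  | j :: L, f => Psi n Q j (PsiList n Q L f)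

namespace PsiAux

open Finset Equiv

/-- The inversion set of a permutation. -/
def invSet {m : ℕ} (π : Equiv.Perm (Fin m)) : Finset (Fin m × Fin m) :=
  Finset.univ.filter (fun p : Fin m × Fin m => p.1 < p.2 ∧ π p.2 < π p.1)

lemma invCount_eq_card {m : ℕ} (π : Equiv.Perm (Fin m)) :
    invCount π = (invSet π).card := rfl

lemma Qprod_eq_prod {T : Type*} {m : ℕ} (Q : T → T → ℂ) (π : Equiv.Perm (Fin m))
    (t : Fin m → T) : Qprod m Q π t = ∏ p ∈ invSet π, Q (t p.1) (t p.2) := rfl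

lemma swap_val {n : ℕ} (j : Fin n) (x : Fin (n+1)) :
    (Equiv.swap j.castSucc j.succ x).val =
      if x.val = j.val then j.val + 1 else if x.val = j.val + 1 then j.val else x.val := by
  rw [Equiv.swap_apply_def]
  have h1 : (j.castSucc : Fin (n+1)).val = j.val := rfl
  have h2 : (j.succ : Fin (n+1)).val = j.val + 1 := rfl
  by_cases hx : x = j.castSucc
  · subst hx; simp [h1, h2]
  · by_cases hx2 : x = j.succ
    · subst hx2
      have : (j.succ : Fin (n+1)).val ≠ j.val := by simp [h2]
      simp [hx, h1, h2]
    · have v1 : x.val ≠ j.val := fun h => hx (Fin.ext (by rw [h1, h]))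
      have v2 : x.val ≠ j.val + 1 := fun h => hx2 (Fin.ext (by rw [h2, h]))
      simp [hx, hx2, v1, v2]

lemma helper {n : ℕ} (j : Fin n) {a b : Fin (n+1)} (hab : a < b)
    (hne : ¬(a = j.castSucc ∧ b = j.succ)) :
    Equiv.swap j.castSucc j.succ a < Equiv.swap j.castSucc j.succ b := by
  have hne' : ¬(a.val = j.val ∧ b.val = j.val + 1) := by
    intro ⟨h1, h2⟩; exact hne ⟨Fin.ext h1, Fin.ext h2⟩
  rw [Fin.lt_def] at hab ⊢
  rw [swap_val, swap_val]
  split_ifs <;> omega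

section Swap

variable {n : ℕ} (j : Fin n) (ρ : Equiv.Perm (Fin (n+1)))

local notation "σ" => Equiv.swap (Fin.castSucc j) (Fin.succ j)
local notation "q0" => ((Fin.castSucc j, Fin.succ j) : Fin (n+1) × Fin (n+1))

lemma Ginj : Function.Injective (fun p : Fin (n+1) × Fin (n+1) => (σ p.1, σ p.2)) := by
  intro p q h
  rw [Prod.mk.injEq] at h
  exact Prod.ext ((Equiv.swap _ _).injective h.1) ((Equiv.swap _ _).injective h.2)

/-- membership of the critical pair -/
lemma q0_mem_iff : q0 ∈ invSet (ρ * σ) ↔ q0 ∉ invSet ρ := by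
  have hlt := (Fin.castSucc_lt_succ : j.castSucc < j.succ)
  have hne : Fin.castSucc j ≠ Fin.succ j := ne_of_lt hlt
  simp only [invSet, Finset.mem_filter, Finset.mem_univ, true_and]
  simp only [Equiv.Perm.mul_apply, Equiv.swap_apply_left, Equiv.swap_apply_right]
  constructor
  · rintro ⟨-, h⟩ ⟨-, h'⟩; exact absurd (h.trans h') (lt_irrefl _)
  · intro h
    refine ⟨hlt, ?_⟩
    rcases lt_or_gt_of_ne (fun he => hne (ρ.injective he)) with h1 | h1
    · exact h1
    · exact absurd ⟨hlt, h1⟩ h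

lemma erase_invSet_mul_swap :
    (invSet (ρ * σ)).erase q0 =
      ((invSet ρ).erase q0).image (fun p => (σ p.1, σ p.2)) := by
  have hlt := (Fin.castSucc_lt_succ : j.castSucc < j.succ)
  ext p
  simp only [invSet, Finset.mem_erase, Finset.mem_filter, Finset.mem_univ, true_and,
    Finset.mem_image]
  simp only [Equiv.Perm.mul_apply]
  constructor
  · rintro ⟨hpq, hp12, hinv⟩
    refine ⟨(σ p.1, σ p.2), ⟨?_, ?_, ?_⟩, ?_⟩
    · intro h
      rw [Prod.mk.injEq] at h
      have h2 : p.2 = Fin.castSucc j := by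
        have := congrArg (σ ·) h.2; simpa using this
      have hp1 : p.1 = Fin.succ j := by
        have := congrArg (σ ·) h.1; simpa using this
      rw [hp1, h2] at hp12
      exact absurd (hlt.trans hp12) (lt_irrefl _)
    · exact helper j hp12 (fun hh => hpq (Prod.ext hh.1 hh.2))
    · simpa using hinv
    · simp
  · rintro ⟨q, ⟨hq0, hq12, hinv⟩, rfl⟩
    refine ⟨?_, helper j hq12 (fun hh => hq0 (Prod.ext hh.1 hh.2)), by simpa using hinv⟩
    intro h
    rw [Prod.mk.injEq] at h
    have h1 : q.1 = Fin.succ j := by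
      have := congrArg (σ ·) h.1; simpa using this
    have h2 : q.2 = Fin.castSucc j := by
      have := congrArg (σ ·) h.2; simpa using this
    rw [h1, h2] at hq12
    exact absurd (hlt.trans hq12) (lt_irrefl _)

lemma q0_mem_invSet_iff : q0 ∈ invSet ρ ↔ ρ j.succ < ρ j.castSucc := by
  simp [invSet, (Fin.castSucc_lt_succ : j.castSucc < j.succ)]

lemma q0_not_mem_image :
    q0 ∉ ((invSet ρ).erase q0).image (fun p => (σ p.1, σ p.2)) := by
  intro h
  rw [Finset.mem_image] at h
  obtain ⟨q, hq, hGq⟩ := h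
  rw [Prod.mk.injEq] at hGq
  have h1 : q.1 = Fin.succ j := by
    have := congrArg (σ ·) hGq.1; simpa using this
  have h2 : q.2 = Fin.castSucc j := by
    have := congrArg (σ ·) hGq.2; simpa using this
  rw [Finset.mem_erase] at hq
  have hq12 := hq.2
  rw [invSet, Finset.mem_filter] at hq12
  have := hq12.2.1
  rw [h1, h2] at this
  exact absurd (((Fin.castSucc_lt_succ : j.castSucc < j.succ)).trans this) (lt_irrefl _)

lemma card_invSet_mul_swap :
    (if ρ j.castSucc < ρ j.succ then (invSet (ρ * σ)).card = (invSet ρ).card + 1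
     else (invSet (ρ * σ)).card + 1 = (invSet ρ).card) := by
  have hne : ρ j.castSucc ≠ ρ j.succ :=
    fun h => ne_of_lt ((Fin.castSucc_lt_succ : j.castSucc < j.succ)) (ρ.injective h)
  split_ifs with h
  · -- q0 ∉ invSet ρ, q0 ∈ invSet (ρ * σ)
    have hn : q0 ∉ invSet ρ := by
      rw [q0_mem_invSet_iff]; exact fun h' => absurd (h.trans h') (lt_irrefl _)
    have hm : q0 ∈ invSet (ρ * σ) := (q0_mem_iff j ρ).mpr hn
    have he := erase_invSet_mul_swap j ρ
    rw [Finset.erase_eq_of_notMem hn] at he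
    calc (invSet (ρ * σ)).card = ((invSet (ρ * σ)).erase q0).card + 1 :=
          (Finset.card_erase_add_one hm).symm
      _ = ((invSet ρ).image (fun p => (σ p.1, σ p.2))).card + 1 := by rw [he]
      _ = (invSet ρ).card + 1 := by rw [Finset.card_image_of_injective _ (Ginj j)]
  · have hmem : q0 ∈ invSet ρ := by
      rw [q0_mem_invSet_iff]
      rcases lt_or_gt_of_ne hne with h1 | h1
      · exact absurd h1 h
      · exact h1
    have hn : q0 ∉ invSet (ρ * σ) := fun h' => ((q0_mem_iff j ρ).mp h') hmem
    have he := erase_invSet_mul_swap j ρ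
    rw [Finset.erase_eq_of_notMem hn] at he
    calc (invSet (ρ * σ)).card + 1
        = (((invSet ρ).erase q0).image (fun p => (σ p.1, σ p.2))).card + 1 := by rw [he]
      _ = ((invSet ρ).erase q0).card + 1 := by
          rw [Finset.card_image_of_injective _ (Ginj j)]
      _ = (invSet ρ).card := Finset.card_erase_add_one hmem

lemma prod_invSet_mul_swap {T : Type*} (Q : T → T → ℂ) (t : Fin (n+1) → T)
    (h : ρ j.castSucc < ρ j.succ) :
    ∏ p ∈ invSet (ρ * σ), Q (t p.1) (t p.2) =
      Q (t j.castSucc) (t j.succ) * ∏ p ∈ invSet ρ, Q (t (σ p.1)) (t (σ p.2)) := by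
  have hn : q0 ∉ invSet ρ := by
    rw [q0_mem_invSet_iff]; exact fun h' => absurd (h.trans h') (lt_irrefl _)
  have hm : q0 ∈ invSet (ρ * σ) := (q0_mem_iff j ρ).mpr hn
  have he := erase_invSet_mul_swap j ρ
  have hni := q0_not_mem_image j ρ
  rw [Finset.erase_eq_of_notMem hn] at he hni
  have hkey : invSet (ρ * σ) = insert q0 ((invSet ρ).image (fun p => (σ p.1, σ p.2))) := by
    rw [← he, Finset.insert_erase hm]
  rw [hkey, Finset.prod_insert hni,
    Finset.prod_image (Function.Injective.injOn (Ginj j))]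

end Swap

lemma invCount_inv {m : ℕ} (π : Equiv.Perm (Fin m)) :
    invCount π⁻¹ = invCount π := by
  rw [invCount_eq_card, invCount_eq_card]
  apply Finset.card_bij (fun p _ => (π⁻¹ p.2, π⁻¹ p.1))
  · rintro p hp
    simp only [invSet, Finset.mem_filter, Finset.mem_univ, true_and] at hp ⊢
    exact ⟨hp.2, by simpa using hp.1⟩
  · intro p hp q hq h
    rw [Prod.mk.injEq] at h
    exact Prod.ext (π⁻¹.injective h.2) (π⁻¹.injective h.1)
  · intro q hq
    simp only [invSet, Finset.mem_filter, Finset.mem_univ, true_and] at hq ⊢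
    exact ⟨(π q.2, π q.1), ⟨hq.2, by simpa using hq.1⟩, by simp⟩

lemma invCount_prod_le {n : ℕ} (L : List (Fin n)) :
    invCount (L.map (adjSwap n)).prod ≤ L.length := by
  induction L with
  | nil =>
    simp only [List.map_nil, List.prod_nil, List.length_nil, Nat.le_zero,
      invCount_eq_card, Finset.card_eq_zero]
    rw [Finset.eq_empty_iff_forall_notMem]
    rintro p hp
    rw [invSet, Finset.mem_filter] at hp
    simp only [Equiv.Perm.one_apply] at hp
    exact absurd (hp.2.1.trans hp.2.2) (lt_irrefl _)
  | cons j L ih =>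
    rw [List.map_cons, List.prod_cons, List.length_cons]
    set τ := (L.map (adjSwap n)).prod with hτ
    have hinv : (adjSwap n j * τ)⁻¹ = τ⁻¹ * adjSwap n j := by
      rw [mul_inv_rev, adjSwap, Equiv.swap_inv]
    have hc := card_invSet_mul_swap j τ⁻¹
    have h1 : invCount (adjSwap n j * τ) = (invSet (τ⁻¹ * Equiv.swap j.castSucc j.succ)).card := by
      rw [← invCount_inv, hinv, invCount_eq_card]; rfl
    have h2 : invCount τ = (invSet τ⁻¹).card := by
      rw [← invCount_inv, invCount_eq_card]
    split_ifs at hc <;> omega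

end PsiAux

/-- For any reduced word `π = π_{j₁} ⋯ π_{j_m}`, the operator
`Ψ_π = Ψ_{j₁} ⋯ Ψ_{j_m}` satisfies `(Ψ_π f)(t) = Q_{π⁻¹}(t) f(t_π)`.
In particular `Ψ_π` is independent of the chosen reduced word. -/
theorem PsiList_reduced_eq {T : Type*} {n : ℕ} (Q : T → T → ℂ)
    (π : Equiv.Perm (Fin (n + 1))) (L : List (Fin n))
    (hprod : (L.map (adjSwap n)).prod = π) (hred : L.length = invCount π)
    (f : (Fin (n + 1) → T) → ℂ) (t : Fin (n + 1) → T) :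
    PsiList n Q L f t = Qprod (n + 1) Q π⁻¹ t * f (t ∘ π) := by
  induction L generalizing π f t with
  | nil =>
    simp only [List.map_nil, List.prod_nil] at hprod
    subst hprod
    have hQ : Qprod (n + 1) Q (1 : Equiv.Perm (Fin (n+1)))⁻¹ t = 1 := by
      rw [inv_one, Qprod, Finset.filter_false_of_mem, Finset.prod_empty]
      rintro p - ⟨h1, h2⟩
      simp only [Equiv.Perm.one_apply] at h2
      exact absurd (h1.trans h2) (lt_irrefl _)
    have hf : t ∘ ⇑(1 : Equiv.Perm (Fin (n+1))) = t := by
      funext x; simp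
    rw [hQ, hf, PsiList, one_mul]
  | cons j L ih =>
    rw [List.map_cons, List.prod_cons] at hprod
    rw [List.length_cons] at hred
    set τ := (L.map (adjSwap n)).prod with hτ
    have hπinv : π⁻¹ = τ⁻¹ * adjSwap n j := by
      rw [← hprod, mul_inv_rev, adjSwap, Equiv.swap_inv]
    have hbound : invCount τ ≤ L.length := PsiAux.invCount_prod_le L
    have hcardπ : invCount π = (PsiAux.invSet (τ⁻¹ * Equiv.swap j.castSucc j.succ)).card := by
      rw [← PsiAux.invCount_inv, hπinv, PsiAux.invCount_eq_card]; rfl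
    have hcardτ : invCount τ = (PsiAux.invSet τ⁻¹).card := by
      rw [← PsiAux.invCount_inv, PsiAux.invCount_eq_card]
    have hc := PsiAux.card_invSet_mul_swap j τ⁻¹
    by_cases h : τ⁻¹ j.castSucc < τ⁻¹ j.succ
    · rw [if_pos h] at hc
      have hlen : L.length = invCount τ := by omega
      have hIH := ih τ rfl hlen f (t ∘ Equiv.swap j.castSucc j.succ)
      have hf : (t ∘ Equiv.swap j.castSucc j.succ) ∘ ⇑τ = t ∘ ⇑π := by
        rw [← hprod]; funext x
        simp [adjSwap, Equiv.Perm.mul_apply, Function.comp]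
      have hQ : Qprod (n + 1) Q π⁻¹ t =
          Q (t j.castSucc) (t j.succ) *
            Qprod (n + 1) Q τ⁻¹ (t ∘ Equiv.swap j.castSucc j.succ) := by
        rw [hπinv, PsiAux.Qprod_eq_prod, PsiAux.Qprod_eq_prod]
        exact PsiAux.prod_invSet_mul_swap j τ⁻¹ Q t h
      show Psi n Q j (PsiList n Q L f) t = _
      rw [Psi, hIH, hQ, hf]
      ring
    · rw [if_neg h] at hc
      omega
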